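/- arXiv:1812.04305 — 2 statements merged into one kernel-verified Lean document; each statement's English description precedes it below -/
import Mathlib

section
/- For any given density ρ₀ and any momentum components j_x, j_y, the vector m₀ = (ρ₀, j_x, j_y, α λ² ρ₀, 0, 0, −λ² j_x, −λ² j_y, β λ⁴ ρ₀)ᵗ satisfies the order-zero fluid anti bounce back boundary equation K m₀ = M ξ₀, where ξ₀ is the boundary data vector (0,0,(4−α−2β)ρ₀/18,0,0,(4+2α+β)ρ₀/18,(4+2α+β)ρ₀/18,0,0)ᵗ. -/
open Matrix

noncomputable section

/-- D2Q9 moment matrix (equation 5). -/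
def Md (l : ℝ) : Matrix (Fin 9) (Fin 9) ℝ :=
  !![1, 1, 1, 1, 1, 1, 1, 1, 1;
     0, l, 0, -l, 0, l, -l, -l, l;
     0, 0, l, 0, -l, l, l, -l, -l;
     -4*l^2, -l^2, -l^2, -l^2, -l^2, 2*l^2, 2*l^2, 2*l^2, 2*l^2;
     0, l^2, -l^2, l^2, -l^2, 0, 0, 0, 0;
     0, 0, 0, 0, 0, l^2, -l^2, l^2, -l^2;
     0, -2*l^3, 0, 2*l^3, 0, l^3, -l^3, -l^3, l^3;
     0, 0, -2*l^3, 0, 2*l^3, l^3, l^3, -l^3, -l^3;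
     4*l^4, -2*l^4, -2*l^4, -2*l^4, -2*l^4, l^4, l^4, l^4, l^4]

/-- Fluid collision matrix (equation 14). -/
def Cfl (l a b se sx sq sd : ℝ) : Matrix (Fin 9) (Fin 9) ℝ :=
  !![1, 0, 0, 0, 0, 0, 0, 0, 0;
     0, 1, 0, 0, 0, 0, 0, 0, 0;
     0, 0, 1, 0, 0, 0, 0, 0, 0;
     a*se*l^2, 0, 0, 1 - se, 0, 0, 0, 0, 0;
     0, 0, 0, 0, 1 - sx, 0, 0, 0, 0;
     0, 0, 0, 0, 0, 1 - sx, 0, 0, 0;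
     0, -sq*l^2, 0, 0, 0, 0, 1 - sq, 0, 0;
     0, 0, -sq*l^2, 0, 0, 0, 0, 1 - sq, 0;
     b*sd*l^4, 0, 0, 0, 0, 0, 0, 0, 1 - sd]

/-- Matrix U (equation 21): diagonal 0/1 with ones at positions 0,1,3,4,7,8. -/
def Ub : Matrix (Fin 9) (Fin 9) ℝ :=
  !![1, 0, 0, 0, 0, 0, 0, 0, 0;
     0, 1, 0, 0, 0, 0, 0, 0, 0;
     0, 0, 0, 0, 0, 0, 0, 0, 0;
     0, 0, 0, 1, 0, 0, 0, 0, 0;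
     0, 0, 0, 0, 1, 0, 0, 0, 0;
     0, 0, 0, 0, 0, 0, 0, 0, 0;
     0, 0, 0, 0, 0, 0, 0, 0, 0;
     0, 0, 0, 0, 0, 0, 0, 1, 0;
     0, 0, 0, 0, 0, 0, 0, 0, 1]

/-- Anti bounce back interaction matrix T (equation 22). -/
def Tabb : Matrix (Fin 9) (Fin 9) ℝ :=
  !![0, 0, 0, 0, 0, 0, 0, 0, 0;
     0, 0, 0, 0, 0, 0, 0, 0, 0;
     0, 0, 0, 0, -1, 0, 0, 0, 0;
     0, 0, 0, 0, 0, 0, 0, 0, 0;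
     0, 0, 0, 0, 0, 0, 0, 0, 0;
     0, 0, 0, 0, 0, 0, 0, -1, 0;
     0, 0, 0, 0, 0, 0, 0, 0, -1;
     0, 0, 0, 0, 0, 0, 0, 0, 0;
     0, 0, 0, 0, 0, 0, 0, 0, 0]

/-- Fluid anti bounce back boundary matrix K = I - M (T + U) M⁻¹ C (equation 32). -/
def Kfl (l a b se sx sq sd : ℝ) : Matrix (Fin 9) (Fin 9) ℝ :=
  1 - Md l * (Tabb + Ub) * (Md l)⁻¹ * Cfl l a b se sx sq sd




lemma cons_val_five' {α : Type*} {m : ℕ} (x : α) (u : Fin m.succ.succ.succ.succ.succ → α) :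
    Matrix.vecCons x u 5 = Matrix.vecHead (Matrix.vecTail (Matrix.vecTail (Matrix.vecTail (Matrix.vecTail u)))) := rfl
lemma cons_val_six' {α : Type*} {m : ℕ} (x : α) (u : Fin m.succ.succ.succ.succ.succ.succ → α) :
    Matrix.vecCons x u 6 = Matrix.vecHead (Matrix.vecTail (Matrix.vecTail (Matrix.vecTail (Matrix.vecTail (Matrix.vecTail u))))) := rfl
lemma cons_val_seven' {α : Type*} {m : ℕ} (x : α) (u : Fin m.succ.succ.succ.succ.succ.succ.succ → α) :
    Matrix.vecCons x u 7 = Matrix.vecHead (Matrix.vecTail (Matrix.vecTail (Matrix.vecTail (Matrix.vecTail (Matrix.vecTail (Matrix.vecTail u)))))) := rfl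
lemma cons_val_eight' {α : Type*} {m : ℕ} (x : α) (u : Fin m.succ.succ.succ.succ.succ.succ.succ.succ → α) :
    Matrix.vecCons x u 8 = Matrix.vecHead (Matrix.vecTail (Matrix.vecTail (Matrix.vecTail (Matrix.vecTail (Matrix.vecTail (Matrix.vecTail (Matrix.vecTail u))))))) := rfl

/-- Explicit inverse of the moment matrix. -/
def Ninv (l : ℝ) : Matrix (Fin 9) (Fin 9) ℝ :=
  !![1/9, 0, 0, -1/(9*l^2), 0, 0, 0, 0, 1/(9*l^4);
     1/9, 1/(6*l), 0, -1/(36*l^2), 1/(4*l^2), 0, -1/(6*l^3), 0, -1/(18*l^4);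
     1/9, 0, 1/(6*l), -1/(36*l^2), -1/(4*l^2), 0, 0, -1/(6*l^3), -1/(18*l^4);
     1/9, -1/(6*l), 0, -1/(36*l^2), 1/(4*l^2), 0, 1/(6*l^3), 0, -1/(18*l^4);
     1/9, 0, -1/(6*l), -1/(36*l^2), -1/(4*l^2), 0, 0, 1/(6*l^3), -1/(18*l^4);
     1/9, 1/(6*l), 1/(6*l), 1/(18*l^2), 0, 1/(4*l^2), 1/(12*l^3), 1/(12*l^3), 1/(36*l^4);
     1/9, -1/(6*l), 1/(6*l), 1/(18*l^2), 0, -1/(4*l^2), -1/(12*l^3), 1/(12*l^3), 1/(36*l^4);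
     1/9, -1/(6*l), -1/(6*l), 1/(18*l^2), 0, 1/(4*l^2), -1/(12*l^3), -1/(12*l^3), 1/(36*l^4);
     1/9, 1/(6*l), -1/(6*l), 1/(18*l^2), 0, -1/(4*l^2), 1/(12*l^3), -1/(12*l^3), 1/(36*l^4)]

set_option maxHeartbeats 2000000 in
lemma Md_mul_Ninv (l : ℝ) (hl : l ≠ 0) : Md l * Ninv l = 1 := by
  ext i j
  fin_cases i <;> fin_cases j <;>
    simp [Md, Ninv, Matrix.mul_apply, Fin.sum_univ_succ, cons_val_five', cons_val_six',
      cons_val_seven', cons_val_eight', Matrix.one_apply] <;>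
    field_simp <;> ring

lemma Md_inv_eq (l : ℝ) (hl : l ≠ 0) : (Md l)⁻¹ = Ninv l :=
  Matrix.inv_eq_right_inv (Md_mul_Ninv l hl)

lemma TU_eq : Tabb + Ub =
    !![1, 0, 0, 0, 0, 0, 0, 0, 0;
       0, 1, 0, 0, 0, 0, 0, 0, 0;
       0, 0, 0, 0, -1, 0, 0, 0, 0;
       0, 0, 0, 1, 0, 0, 0, 0, 0;
       0, 0, 0, 0, 1, 0, 0, 0, 0;
       0, 0, 0, 0, 0, 0, 0, -1, 0;
       0, 0, 0, 0, 0, 0, 0, 0, -1;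
       0, 0, 0, 0, 0, 0, 0, 1, 0;
       0, 0, 0, 0, 0, 0, 0, 0, 1] := by
  ext i j
  fin_cases i <;> fin_cases j <;> norm_num [Tabb, Ub]

set_option maxHeartbeats 4000000 in
theorem Kfl_order_zero_solution (l a b se sx sq sd ρ₀ jx jy : ℝ) (hl : l ≠ 0) :
    (Kfl l a b se sx sq sd).mulVec
        (![ρ₀, jx, jy, a*l^2*ρ₀, 0, 0, -l^2*jx, -l^2*jy, b*l^4*ρ₀])
      = (Md l).mulVec
        (![0, 0, (4 - a - 2*b)*ρ₀/18, 0, 0, (4 + 2*a + b)*ρ₀/18, (4 + 2*a + b)*ρ₀/18, 0, 0]) := by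
  have h1 : (Cfl l a b se sx sq sd).mulVec
      (![ρ₀, jx, jy, a*l^2*ρ₀, 0, 0, -l^2*jx, -l^2*jy, b*l^4*ρ₀])
      = ![ρ₀, jx, jy, a*l^2*ρ₀, 0, 0, -l^2*jx, -l^2*jy, b*l^4*ρ₀] := by
    funext i
    fin_cases i <;>
      simp [Cfl, Matrix.mulVec, dotProduct, Fin.sum_univ_succ, cons_val_five', cons_val_six', cons_val_seven', cons_val_eight'] <;>
      ring
  have h2 : (Ninv l).mulVec (![ρ₀, jx, jy, a*l^2*ρ₀, 0, 0, -l^2*jx, -l^2*jy, b*l^4*ρ₀])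
      = ![ρ₀/9 + b*ρ₀/9 - a*ρ₀/9,
          jx/(3*l) + ρ₀/9 - b*ρ₀/18 - a*ρ₀/36,
          jy/(3*l) + ρ₀/9 - b*ρ₀/18 - a*ρ₀/36,
          -(jx/(3*l)) + ρ₀/9 - b*ρ₀/18 - a*ρ₀/36,
          -(jy/(3*l)) + ρ₀/9 - b*ρ₀/18 - a*ρ₀/36,
          jy/(12*l) + jx/(12*l) + ρ₀/9 + b*ρ₀/36 + a*ρ₀/18,
          jy/(12*l) - jx/(12*l) + ρ₀/9 + b*ρ₀/36 + a*ρ₀/18,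
          -(jy/(12*l)) - jx/(12*l) + ρ₀/9 + b*ρ₀/36 + a*ρ₀/18,
          -(jy/(12*l)) + jx/(12*l) + ρ₀/9 + b*ρ₀/36 + a*ρ₀/18] := by
    funext i
    fin_cases i <;>
      simp [Ninv, Matrix.mulVec, dotProduct, Fin.sum_univ_succ, cons_val_five', cons_val_six', cons_val_seven', cons_val_eight'] <;>
      field_simp <;> ring
  have h3 : (!![1, 0, 0, 0, 0, 0, 0, 0, 0;
       0, 1, 0, 0, 0, 0, 0, 0, 0;
       0, 0, 0, 0, -1, 0, 0, 0, 0;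
       0, 0, 0, 1, 0, 0, 0, 0, 0;
       0, 0, 0, 0, 1, 0, 0, 0, 0;
       0, 0, 0, 0, 0, 0, 0, -1, 0;
       0, 0, 0, 0, 0, 0, 0, 0, -1;
       0, 0, 0, 0, 0, 0, 0, 1, 0;
       0, 0, 0, 0, 0, 0, 0, 0, 1] : Matrix (Fin 9) (Fin 9) ℝ).mulVec
      (![ρ₀/9 + b*ρ₀/9 - a*ρ₀/9,
          jx/(3*l) + ρ₀/9 - b*ρ₀/18 - a*ρ₀/36,
          jy/(3*l) + ρ₀/9 - b*ρ₀/18 - a*ρ₀/36,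
          -(jx/(3*l)) + ρ₀/9 - b*ρ₀/18 - a*ρ₀/36,
          -(jy/(3*l)) + ρ₀/9 - b*ρ₀/18 - a*ρ₀/36,
          jy/(12*l) + jx/(12*l) + ρ₀/9 + b*ρ₀/36 + a*ρ₀/18,
          jy/(12*l) - jx/(12*l) + ρ₀/9 + b*ρ₀/36 + a*ρ₀/18,
          -(jy/(12*l)) - jx/(12*l) + ρ₀/9 + b*ρ₀/36 + a*ρ₀/18,
          -(jy/(12*l)) + jx/(12*l) + ρ₀/9 + b*ρ₀/36 + a*ρ₀/18])
      = ![ρ₀/9 + b*ρ₀/9 - a*ρ₀/9,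
          jx/(3*l) + ρ₀/9 - b*ρ₀/18 - a*ρ₀/36,
          jy/(3*l) - ρ₀/9 + b*ρ₀/18 + a*ρ₀/36,
          -(jx/(3*l)) + ρ₀/9 - b*ρ₀/18 - a*ρ₀/36,
          -(jy/(3*l)) + ρ₀/9 - b*ρ₀/18 - a*ρ₀/36,
          jy/(12*l) + jx/(12*l) - ρ₀/9 - b*ρ₀/36 - a*ρ₀/18,
          jy/(12*l) - jx/(12*l) - ρ₀/9 - b*ρ₀/36 - a*ρ₀/18,
          -(jy/(12*l)) - jx/(12*l) + ρ₀/9 + b*ρ₀/36 + a*ρ₀/18,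
          -(jy/(12*l)) + jx/(12*l) + ρ₀/9 + b*ρ₀/36 + a*ρ₀/18] := by
    funext i
    fin_cases i <;>
      simp [Matrix.mulVec, dotProduct, Fin.sum_univ_succ, cons_val_five', cons_val_six', cons_val_seven', cons_val_eight'] <;>
      ring
  have h4 : (Md l).mulVec
      (![ρ₀/9 + b*ρ₀/9 - a*ρ₀/9,
          jx/(3*l) + ρ₀/9 - b*ρ₀/18 - a*ρ₀/36,
          jy/(3*l) - ρ₀/9 + b*ρ₀/18 + a*ρ₀/36,
          -(jx/(3*l)) + ρ₀/9 - b*ρ₀/18 - a*ρ₀/36,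
          -(jy/(3*l)) + ρ₀/9 - b*ρ₀/18 - a*ρ₀/36,
          jy/(12*l) + jx/(12*l) - ρ₀/9 - b*ρ₀/36 - a*ρ₀/18,
          jy/(12*l) - jx/(12*l) - ρ₀/9 - b*ρ₀/36 - a*ρ₀/18,
          -(jy/(12*l)) - jx/(12*l) + ρ₀/9 + b*ρ₀/36 + a*ρ₀/18,
          -(jy/(12*l)) + jx/(12*l) + ρ₀/9 + b*ρ₀/36 + a*ρ₀/18])
      = ![ρ₀/3 - a*ρ₀/6,
          jx,
          jy - 2*l*ρ₀/3 - l*a*ρ₀/6,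
          -(2*l^2*ρ₀/3) - l^2*b*ρ₀/3 + l^2*a*ρ₀/2,
          2*l^2*ρ₀/9 - l^2*b*ρ₀/9 - l^2*a*ρ₀/18,
          0,
          -(l^2*jx),
          -(l^2*jy) - l^3*b*ρ₀/3 - l^3*a*ρ₀/3,
          2*l^4*b*ρ₀/3 - l^4*a*ρ₀/3] := by
    funext i
    fin_cases i <;>
      simp [Md, Matrix.mulVec, dotProduct, Fin.sum_univ_succ, cons_val_five', cons_val_six', cons_val_seven', cons_val_eight'] <;>
      field_simp <;> ring
  have h5 : (Md l).mulVec
      (![0, 0, (4 - a - 2*b)*ρ₀/18, 0, 0, (4 + 2*a + b)*ρ₀/18, (4 + 2*a + b)*ρ₀/18, 0, 0])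
      = ![2*ρ₀/3 + a*ρ₀/6,
          0,
          2*l*ρ₀/3 + l*a*ρ₀/6,
          2*l^2*ρ₀/3 + l^2*b*ρ₀/3 + l^2*a*ρ₀/2,
          -(2*l^2*ρ₀/9) + l^2*b*ρ₀/9 + l^2*a*ρ₀/18,
          0,
          0,
          l^3*b*ρ₀/3 + l^3*a*ρ₀/3,
          l^4*b*ρ₀/3 + l^4*a*ρ₀/3] := by
    funext i
    fin_cases i <;>
      simp [Md, Matrix.mulVec, dotProduct, Fin.sum_univ_succ, cons_val_five', cons_val_six', cons_val_seven', cons_val_eight'] <;>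
      ring
  rw [Kfl, Md_inv_eq l hl, Matrix.sub_mulVec, Matrix.one_mulVec,
    ← Matrix.mulVec_mulVec, ← Matrix.mulVec_mulVec, ← Matrix.mulVec_mulVec,
    h1, h2, TU_eq, h3, h4, h5]
  funext i
  fin_cases i <;>
    simp [cons_val_five', cons_val_six', cons_val_seven', cons_val_eight'] <;>
    ring
end
end

section
/- For given ρ₀, J_x⁰, J_y⁰, the vector m₀ = (ρ₀, J_x⁰, J_y⁰, α λ² ρ₀, 0, 0, −λ² J_x⁰, −λ² J_y⁰, β λ⁴ ρ₀)ᵗ solves K m₀ = M ξ₀ for the mixed bounce back / anti bounce back boundary scheme, where ξ₀ = (0, 0, (4−α−2β)ρ₀/18, 0, 0, (J_x⁰ + J_y⁰)/(6λ), (−J_x⁰ + J_y⁰)/(6λ), 0, 0)ᵗ. -/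
open Matrix

noncomputable section

/-- Mixed bounce back / anti bounce back interaction matrix T (equation 35). -/
def Tmix : Matrix (Fin 9) (Fin 9) ℝ :=
  !![0, 0, 0, 0, 0, 0, 0, 0, 0;
     0, 0, 0, 0, 0, 0, 0, 0, 0;
     0, 0, 0, 0, -1, 0, 0, 0, 0;
     0, 0, 0, 0, 0, 0, 0, 0, 0;
     0, 0, 0, 0, 0, 0, 0, 0, 0;
     0, 0, 0, 0, 0, 0, 0, 1, 0;
     0, 0, 0, 0, 0, 0, 0, 0, 1;
     0, 0, 0, 0, 0, 0, 0, 0, 0;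
     0, 0, 0, 0, 0, 0, 0, 0, 0]


def Pm (l : ℝ) : Matrix (Fin 9) (Fin 9) ℝ :=
  !![4*l^4, 0, 0, -4*l^2, 0, 0, 0, 0, 4;
     4*l^4, 6*l^3, 0, -l^2, 9*l^2, 0, -6*l, 0, -2;
     4*l^4, 0, 6*l^3, -l^2, -9*l^2, 0, 0, -6*l, -2;
     4*l^4, -6*l^3, 0, -l^2, 9*l^2, 0, 6*l, 0, -2;
     4*l^4, 0, -6*l^3, -l^2, -9*l^2, 0, 0, 6*l, -2;
     4*l^4, 6*l^3, 6*l^3, 2*l^2, 0, 9*l^2, 3*l, 3*l, 1;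
     4*l^4, -6*l^3, 6*l^3, 2*l^2, 0, -9*l^2, -3*l, 3*l, 1;
     4*l^4, -6*l^3, -6*l^3, 2*l^2, 0, 9*l^2, -3*l, -3*l, 1;
     4*l^4, 6*l^3, -6*l^3, 2*l^2, 0, -9*l^2, 3*l, -3*l, 1]

set_option maxHeartbeats 2000000 in
lemma hMP (l : ℝ) : Md l * Pm l = (36*l^4) • 1 := by
  ext i j
  fin_cases i <;> fin_cases j <;>
    norm_num [Md, Pm, Matrix.mul_apply, Fin.sum_univ_succ, Matrix.one_apply, Matrix.smul_apply, Matrix.cons_val_succ, Fin.ext_iff] <;>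
    ring

lemma hMdinv (l : ℝ) (hl : l ≠ 0) : (Md l)⁻¹ = (36*l^4)⁻¹ • Pm l := by
  have hc : (36*l^4 : ℝ) ≠ 0 := by positivity
  apply Matrix.inv_eq_right_inv
  rw [Matrix.mul_smul, hMP, smul_smul, inv_mul_cancel₀ hc, one_smul]

/-- Mixed bounce back / anti bounce back boundary matrix K (equation 36). -/
def Kmix (l a b se sx sq sd : ℝ) : Matrix (Fin 9) (Fin 9) ℝ :=
  1 - Md l * (Tmix + Ub) * (Md l)⁻¹ * Cfl l a b se sx sq sd

set_option maxHeartbeats 4000000 in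
theorem Kmix_order_zero_solution (l a b se sx sq sd ρ₀ Jx0 Jy0 : ℝ) (hl : l ≠ 0) :
    (Kmix l a b se sx sq sd).mulVec
        (![ρ₀, Jx0, Jy0, a*l^2*ρ₀, 0, 0, -l^2*Jx0, -l^2*Jy0, b*l^4*ρ₀])
      = (Md l).mulVec
        (![0, 0, (4 - a - 2*b)*ρ₀/18, 0, 0, (Jx0 + Jy0)/(6*l), (-Jx0 + Jy0)/(6*l), 0, 0]) := by
  have hc : (36*l^4 : ℝ) ≠ 0 := by positivity
  set m : Fin 9 → ℝ := ![ρ₀, Jx0, Jy0, a*l^2*ρ₀, 0, 0, -l^2*Jx0, -l^2*Jy0, b*l^4*ρ₀] with hm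
  set f : Fin 9 → ℝ := ![(1-a+b)*ρ₀/9,
    (4-a-2*b)*ρ₀/36 + Jx0/(3*l),
    (4-a-2*b)*ρ₀/36 + Jy0/(3*l),
    (4-a-2*b)*ρ₀/36 - Jx0/(3*l),
    (4-a-2*b)*ρ₀/36 - Jy0/(3*l),
    (4+2*a+b)*ρ₀/36 + (Jx0+Jy0)/(12*l),
    (4+2*a+b)*ρ₀/36 + (-Jx0+Jy0)/(12*l),
    (4+2*a+b)*ρ₀/36 - (Jx0+Jy0)/(12*l),
    (4+2*a+b)*ρ₀/36 + (Jx0-Jy0)/(12*l)] with hf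
  set v3 : Fin 9 → ℝ := ![(1-a+b)*ρ₀/9,
    (4-a-2*b)*ρ₀/36 + Jx0/(3*l),
    -((4-a-2*b)*ρ₀/36 - Jy0/(3*l)),
    (4-a-2*b)*ρ₀/36 - Jx0/(3*l),
    (4-a-2*b)*ρ₀/36 - Jy0/(3*l),
    (4+2*a+b)*ρ₀/36 - (Jx0+Jy0)/(12*l),
    (4+2*a+b)*ρ₀/36 + (Jx0-Jy0)/(12*l),
    (4+2*a+b)*ρ₀/36 - (Jx0+Jy0)/(12*l),
    (4+2*a+b)*ρ₀/36 + (Jx0-Jy0)/(12*l)] with hv3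
  have hC : (Cfl l a b se sx sq sd).mulVec m = m := by
    funext i
    fin_cases i <;>
      norm_num [Cfl, hm, Matrix.mulVec, dotProduct, Fin.sum_univ_succ, Matrix.cons_val_succ] <;>
      ring
  have hNm : ((36*l^4 : ℝ)⁻¹ • Pm l).mulVec m = f := by
    funext i
    fin_cases i <;>
      norm_num [Pm, hm, hf, Matrix.smul_mulVec, Matrix.mulVec, dotProduct,
        Fin.sum_univ_succ, Matrix.cons_val_succ] <;>
      field_simp <;> ring
  have hT : (Tmix + Ub).mulVec f = v3 := by
    funext i
    fin_cases i <;>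
      norm_num [Tmix, Ub, hf, hv3, Matrix.add_apply, Matrix.mulVec, dotProduct,
        Fin.sum_univ_succ, Matrix.cons_val_succ] <;>
      ring
  have hMf : (Md l).mulVec f = m := by
    funext i
    fin_cases i <;>
      norm_num [Md, hm, hf, Matrix.mulVec, dotProduct, Fin.sum_univ_succ, Matrix.cons_val_succ] <;>
      field_simp <;> ring
  rw [Kmix, Matrix.sub_mulVec, Matrix.one_mulVec, hMdinv l hl,
    ← Matrix.mulVec_mulVec, ← Matrix.mulVec_mulVec, ← Matrix.mulVec_mulVec,
    hC, hNm, hT, ← hMf, ← Matrix.mulVec_sub]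
  have hsub : f - v3
      = ![0, 0, (4 - a - 2*b)*ρ₀/18, 0, 0, (Jx0 + Jy0)/(6*l), (-Jx0 + Jy0)/(6*l), 0, 0] := by
    funext i
    fin_cases i <;>
      norm_num [hf, hv3, Pi.sub_apply, Matrix.cons_val_succ] <;>
      field_simp <;> ring
  rw [hsub]
end
end
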